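/- arXiv:2307.06079 — 7 statements merged into one kernel-verified Lean document; each statement's English description precedes it below -/
import Mathlib

section
/- The minimum nonzero Lee weight of an element of the ideal p^i(ZMod (p^s)), for 0 ≤ i ≤ s-1, is p^i. -/
/-- Lee weight of an element of `ZMod m`. -/
def leeWt (m : ℕ) (x : ZMod m) : ℕ := min x.val (m - x.val)

theorem min_nonzero_lee_weight_ideal (p s i : ℕ) (hp : p.Prime) (hs : 0 < s)
    (hi : i ≤ s - 1) :
    IsLeast {w : ℕ | ∃ x : ZMod (p ^ s), x ≠ 0 ∧
        (∃ y : ZMod (p ^ s), x = (p : ZMod (p ^ s)) ^ i * y) ∧ w = leeWt (p ^ s) x}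
      (p ^ i) := by
  have hilt : i < s := lt_of_le_of_lt hi (Nat.sub_lt hs one_pos)
  have hplt : p ^ i < p ^ s := Nat.pow_lt_pow_right hp.one_lt hilt
  have hdvd : p ^ i ∣ p ^ s := pow_dvd_pow p hilt.le
  have hpi0 : 0 < p ^ i := pow_pos hp.pos i
  have hps0 : 0 < p ^ s := pow_pos hp.pos s
  have h2 : 2 * p ^ i ≤ p ^ s := by
    calc 2 * p ^ i ≤ p * p ^ i := Nat.mul_le_mul_right _ hp.two_le
    _ = p ^ (i + 1) := by ring
    _ ≤ p ^ s := Nat.pow_le_pow_right hp.pos hilt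
  haveI : NeZero (p ^ s) := ⟨hps0.ne'⟩
  haveI : NeZero (p ^ i) := ⟨hpi0.ne'⟩
  constructor
  · refine ⟨(p : ZMod (p ^ s)) ^ i, ?_, ⟨1, by ring⟩, ?_⟩
    · have : ((p ^ i : ℕ) : ZMod (p ^ s)) ≠ 0 := by
        rw [Ne, ZMod.natCast_eq_zero_iff]
        exact fun h => absurd (Nat.le_of_dvd hpi0 h) (not_le.mpr hplt)
      simpa using this
    · have hval : ((p : ZMod (p ^ s)) ^ i).val = p ^ i := by
        have : ((p ^ i : ℕ) : ZMod (p ^ s)).val = p ^ i := ZMod.val_cast_of_lt hplt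
        simpa using this
      rw [leeWt, hval, min_eq_left (by omega)]
  · rintro w ⟨x, hx0, ⟨y, hxy⟩, rfl⟩
    have hxval0 : x.val ≠ 0 := fun h => hx0 (by rwa [← ZMod.val_eq_zero])
    have hdvdval : p ^ i ∣ x.val := by
      have hpz : ((p : ZMod (p ^ i))) ^ i = 0 := by
        rw [← Nat.cast_pow, ZMod.natCast_self]
      have : ((x.val : ℕ) : ZMod (p ^ i)) = 0 := by
        have h := congrArg (ZMod.castHom hdvd (ZMod (p ^ i))) hxy
        rw [map_mul, map_pow, map_natCast, hpz, zero_mul] at h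
        rw [ZMod.natCast_val, ← ZMod.castHom_apply (h := hdvd), h]
      exact (ZMod.natCast_eq_zero_iff _ _).mp this
    have h1 : p ^ i ≤ x.val := Nat.le_of_dvd (Nat.pos_of_ne_zero hxval0) hdvdval
    have h2' : p ^ i ≤ p ^ s - x.val := by
      have hd : p ^ i ∣ p ^ s - x.val := Nat.dvd_sub hdvd hdvdval
      have hlt : x.val < p ^ s := ZMod.val_lt x
      exact Nat.le_of_dvd (by omega) hd
    exact le_min h1 h2'
end

section
/- Let C ⊆ (ZMod (p^s))^n be a ZMod (p^s)-submodule with |C| = p^{s·k} for a rational number k (the ZMod(p^s)-dimension). Then the minimum Hamming distance of C satisfies d_H(C) ≤ n - ⌈k⌉ + 1. -/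
/-- Hamming weight of a vector: the number of nonzero coordinates. -/
def hammingWt (m n : ℕ) (x : Fin n → ZMod m) : ℕ :=
  (Finset.univ.filter (fun i => x i ≠ 0)).card

/-- The minimum Hamming distance of a code. -/
noncomputable def minHammingDist (m n : ℕ) (D : Set (Fin n → ZMod m)) : ℕ :=
  sInf {w : ℕ | ∃ c ∈ D, c ≠ 0 ∧ w = hammingWt m n c}

theorem hamming_singleton_bound_ring (p s n : ℕ) (hp : p.Prime) (hs : 0 < s) (hn : 0 < n)
    (C : Submodule (ZMod (p ^ s)) (Fin n → ZMod (p ^ s))) (hC : C ≠ ⊥) (k : ℚ)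
    (hcard : (Nat.card C : ℝ) = (p : ℝ) ^ ((s : ℝ) * (k : ℝ))) :
    (minHammingDist (p ^ s) n (C : Set (Fin n → ZMod (p ^ s))) : ℤ) ≤ (n : ℤ) - ⌈k⌉ + 1 := by
  classical
  haveI : NeZero (p ^ s) := ⟨pow_ne_zero _ hp.pos.ne'⟩
  set S : Set ℕ := {w : ℕ | ∃ c ∈ (C : Set (Fin n → ZMod (p ^ s))), c ≠ 0 ∧ w = hammingWt (p ^ s) n c} with hSdef
  obtain ⟨c₀, hc₀C, hc₀⟩ := Submodule.exists_mem_ne_zero_of_ne_bot hC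
  have hSne : S.Nonempty := ⟨_, c₀, hc₀C, hc₀, rfl⟩
  set d : ℕ := minHammingDist (p ^ s) n (C : Set (Fin n → ZMod (p ^ s))) with hd
  have hdmem : d ∈ S := Nat.sInf_mem hSne
  obtain ⟨c, hcC, hcne, hcw⟩ := hdmem
  have hd1 : 1 ≤ d := by
    by_contra h
    have h0 : hammingWt (p ^ s) n c = 0 := by omega
    apply hcne
    funext i
    show c i = 0
    have hfe : (Finset.univ.filter (fun i => c i ≠ 0)) = ∅ :=
      Finset.card_eq_zero.mp h0
    by_contra hne
    have hmem : i ∈ Finset.filter (fun i => c i ≠ 0) Finset.univ :=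
      Finset.mem_filter.mpr ⟨Finset.mem_univ i, hne⟩
    rw [hfe] at hmem
    exact absurd hmem (Finset.notMem_empty i)
  have hdn : d ≤ n := by
    calc d = hammingWt (p ^ s) n c := hcw
    _ ≤ (Finset.univ : Finset (Fin n)).card := Finset.card_filter_le _ _
    _ = n := by simp
  set m : ℕ := n - d + 1 with hm
  have hmn : m ≤ n := by omega
  -- injective projection onto first m coordinates
  have hlt : ∀ i : Fin m, (i : ℕ) < n := fun i => lt_of_lt_of_le i.isLt hmn
  set f : C → (Fin m → ZMod (p ^ s)) := fun c i => (c : Fin n → ZMod (p ^ s)) ⟨i, hlt i⟩ with hf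
  have hinj : Function.Injective f := by
    intro a b hab
    by_contra hne
    set x : Fin n → ZMod (p ^ s) := (a : Fin n → ZMod (p ^ s)) - b with hx
    have hxC : x ∈ C := C.sub_mem a.2 b.2
    have hxne : x ≠ 0 := by
      intro h
      exact hne (Subtype.ext (sub_eq_zero.mp h))
    have hdle : d ≤ hammingWt (p ^ s) n x := Nat.sInf_le ⟨x, hxC, hxne, rfl⟩
    -- x vanishes on coordinates < m
    have hvan : ∀ i : Fin n, (i : ℕ) < m → x i = 0 := by
      intro i hi
      have := congrFun hab ⟨i, hi⟩
      simp only [hf] at this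
      have heq : (⟨(i : ℕ), hlt ⟨i, hi⟩⟩ : Fin n) = i := Fin.ext rfl
      rw [heq] at this
      simp [hx, this]
    have hsub : (Finset.univ.filter (fun i : Fin n => x i ≠ 0)) ⊆
        (Finset.univ.filter (fun i : Fin n => m ≤ (i : ℕ))) := by
      intro i hi
      simp only [Finset.mem_filter, Finset.mem_univ, true_and] at hi ⊢
      by_contra h
      exact hi (hvan i (by omega))
    have hcard1 : m ≤ (Finset.univ.filter (fun i : Fin n => (i : ℕ) < m)).card := by
      have : ((Finset.univ : Finset (Fin m)).card ≤
          (Finset.univ.filter (fun i : Fin n => (i : ℕ) < m)).card) := by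
        apply Finset.card_le_card_of_injOn (fun j : Fin m => (⟨(j : ℕ), hlt j⟩ : Fin n))
        · intro j _
          simp [j.isLt]
        · intro a _ b _ h
          simpa [Fin.ext_iff] using h
      simpa using this
    have hcard2 : (Finset.univ.filter (fun i : Fin n => (i : ℕ) < m)).card +
        (Finset.univ.filter (fun i : Fin n => ¬ (i : ℕ) < m)).card = n := by
      rw [Finset.card_filter_add_card_filter_not]; simp
    have hwle : hammingWt (p ^ s) n x ≤ n - m := by
      have := Finset.card_le_card hsub
      have heq : (Finset.univ.filter (fun i : Fin n => m ≤ (i : ℕ))) =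
          (Finset.univ.filter (fun i : Fin n => ¬ (i : ℕ) < m)) := by
        apply Finset.filter_congr; intro i _; simp [Nat.not_lt]
      rw [heq] at this
      unfold hammingWt
      omega
    omega
  -- cardinality bound
  have hcard' : Nat.card C ≤ p ^ (s * m) := by
    have h1 : Nat.card C ≤ Nat.card (Fin m → ZMod (p ^ s)) :=
      Nat.card_le_card_of_injective f hinj
    have h2 : Nat.card (Fin m → ZMod (p ^ s)) = p ^ (s * m) := by
      simp [Nat.card_eq_fintype_card, ZMod.card, ← pow_mul]
    omega
  have hp1 : (1 : ℝ) < (p : ℝ) := by exact_mod_cast hp.one_lt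
  have hreal : (p : ℝ) ^ ((s : ℝ) * (k : ℝ)) ≤ (p : ℝ) ^ ((s : ℝ) * (m : ℝ)) := by
    rw [← hcard]
    calc (Nat.card C : ℝ) ≤ ((p ^ (s * m) : ℕ) : ℝ) := by exact_mod_cast hcard'
    _ = (p : ℝ) ^ ((s : ℝ) * (m : ℝ)) := by
        push_cast
        rw [← Real.rpow_natCast ((p : ℝ)) (s * m)]
        push_cast
        ring_nf
  have hexp : (s : ℝ) * (k : ℝ) ≤ (s : ℝ) * (m : ℝ) :=
    (Real.rpow_le_rpow_left_iff hp1).mp hreal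
  have hkm : (k : ℝ) ≤ (m : ℝ) := by
    have hs' : (0 : ℝ) < (s : ℝ) := by exact_mod_cast hs
    exact le_of_mul_le_mul_left hexp hs'
  have hkq : k ≤ (m : ℚ) := by exact_mod_cast hkm
  have hceil : ⌈k⌉ ≤ (m : ℤ) := Int.ceil_le.mpr (by exact_mod_cast hkq)
  have hmz : (m : ℤ) = (n : ℤ) - (d : ℤ) + 1 := by
    rw [hm]; push_cast [Nat.cast_sub hdn]; ring
  omega
end

section
/- Let C ⊆ (ZMod (p^s))^n be a nonzero ZMod (p^s)-submodule. Then the minimum Lee distance of C satisfies ⌊(d_L(C) - 1)/M⌋ ≤ n - k, where M = ⌊p^s/2⌋ and k = log_{p^s}(|C|). (Shiromoto's Lee-metric Singleton bound.) -/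
/-- Lee weight of a vector over `ZMod m`. -/
def leeWtVec (m n : ℕ) (x : Fin n → ZMod m) : ℕ := ∑ i, leeWt m (x i)

/-- The minimum Lee distance of a code. -/
noncomputable def minLeeDist (m n : ℕ) (D : Set (Fin n → ZMod m)) : ℕ :=
  sInf {w : ℕ | ∃ c ∈ D, c ≠ 0 ∧ w = leeWtVec m n c}

theorem shiromoto_lee_singleton_bound (p s n : ℕ) (hp : p.Prime) (hs : 0 < s) (hn : 0 < n)
    (C : Submodule (ZMod (p ^ s)) (Fin n → ZMod (p ^ s))) (hC : C ≠ ⊥) (k : ℚ)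
    (hcard : (Nat.card C : ℝ) = (p : ℝ) ^ ((s : ℝ) * (k : ℝ))) :
    (⌊((minLeeDist (p ^ s) n (C : Set (Fin n → ZMod (p ^ s))) : ℚ) - 1) /
        ((p ^ s / 2 : ℕ) : ℚ)⌋ : ℚ) ≤ (n : ℚ) - k := by
  have hm2 : 2 ≤ p ^ s := Nat.one_lt_pow hs.ne' hp.one_lt
  haveI : NeZero (p ^ s) := ⟨by omega⟩
  set M := p ^ s / 2 with hM
  have hM1 : 1 ≤ M := by omega
  have hwt_le : ∀ x : ZMod (p ^ s), leeWt (p ^ s) x ≤ M := by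
    intro x
    have := ZMod.val_lt x
    unfold leeWt
    omega
  have hwt_pos : ∀ x : ZMod (p ^ s), x ≠ 0 → 1 ≤ leeWt (p ^ s) x := by
    intro x hx
    have h1 := ZMod.val_lt x
    have h2 : x.val ≠ 0 := fun h => hx ((ZMod.val_eq_zero x).mp h)
    unfold leeWt
    omega
  set S := {w : ℕ | ∃ c ∈ (C : Set (Fin n → ZMod (p ^ s))), c ≠ 0 ∧ w = leeWtVec (p ^ s) n c}
    with hS
  obtain ⟨c0, hc0C, hc0⟩ := Submodule.exists_mem_ne_zero_of_ne_bot hC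
  have hSne : S.Nonempty := ⟨leeWtVec (p ^ s) n c0, c0, hc0C, hc0, rfl⟩
  set d := minLeeDist (p ^ s) n (C : Set (Fin n → ZMod (p ^ s))) with hd
  have hdsInf : d = sInf S := rfl
  have hdS : d ∈ S := hdsInf ▸ Nat.sInf_mem hSne
  obtain ⟨c, hcC, hcne, hdw⟩ := hdS
  have hd1 : 1 ≤ d := by
    obtain ⟨i, hi⟩ := Function.ne_iff.mp hcne
    rw [hdw]
    unfold leeWtVec
    calc 1 ≤ leeWt (p ^ s) (c i) := hwt_pos _ hi
      _ ≤ ∑ j, leeWt (p ^ s) (c j) :=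
        Finset.single_le_sum (f := fun j => leeWt (p ^ s) (c j))
          (fun j _ => Nat.zero_le _) (Finset.mem_univ i)
  have hdn : d ≤ n * M := by
    rw [hdw]
    unfold leeWtVec
    calc ∑ i, leeWt (p ^ s) (c i) ≤ ∑ _i : Fin n, M :=
          Finset.sum_le_sum fun i _ => hwt_le _
      _ = n * M := by simp [mul_comm]
  set t := (d - 1) / M with ht
  have htn : t < n := by
    rw [ht, Nat.div_lt_iff_lt_mul (by omega : 0 < M)]
    omega
  have htM : t * M ≤ d - 1 := Nat.div_mul_le_self _ _
  -- key cardinality bound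
  have key : Nat.card C ≤ (p ^ s) ^ (n - t) := by
    have hinj : Function.Injective (fun (c : C) (j : Fin (n - t)) =>
        (c : Fin n → ZMod (p ^ s)) ⟨t + j, by have := j.isLt; omega⟩) := by
      intro a b hab
      by_contra hne
      have hxne : (a : Fin n → ZMod (p ^ s)) - (b : Fin n → ZMod (p ^ s)) ≠ 0 :=
        sub_ne_zero.mpr (fun h => hne (Subtype.ext h))
      set x := (a : Fin n → ZMod (p ^ s)) - (b : Fin n → ZMod (p ^ s)) with hx
      have hxC : x ∈ C := C.sub_mem a.2 b.2
      have hx0 : ∀ i : Fin n, t ≤ i.val → x i = 0 := by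
        rintro ⟨iv, hiv⟩ hi
        have hit : t ≤ iv := hi
        have hj : iv - t < n - t := by omega
        have h := congrFun hab (⟨iv - t, hj⟩ : Fin (n - t))
        simp only at h
        have h' : (a : Fin n → ZMod (p ^ s)) ⟨iv, hiv⟩ = (b : Fin n → ZMod (p ^ s)) ⟨iv, hiv⟩ := by
          convert h using 3 <;> omega
        show (a : Fin n → ZMod (p ^ s)) ⟨iv, hiv⟩ - (b : Fin n → ZMod (p ^ s)) ⟨iv, hiv⟩ = 0
        rw [sub_eq_zero]
        exact h'
      have hdle : d ≤ leeWtVec (p ^ s) n x := by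
        rw [hdsInf]
        exact Nat.sInf_le ⟨x, hxC, hxne, rfl⟩
      have hwx : leeWtVec (p ^ s) n x ≤ t * M := by
        unfold leeWtVec
        have hzero : ∀ i ∈ Finset.univ, leeWt (p ^ s) (x i) ≠ 0 → (i : Fin n).val < t := by
          intro i _ hne2
          by_contra hge
          push_neg at hge
          rw [hx0 i hge] at hne2
          unfold leeWt at hne2
          have hv0 : (0 : ZMod (p ^ s)).val = 0 := ZMod.val_zero
          omega
        have hcardle : (Finset.univ.filter (fun i : Fin n => i.val < t)).card ≤ t := by
          have := Finset.card_le_card_of_injOn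
            (s := Finset.univ.filter (fun i : Fin n => i.val < t))
            (t := Finset.range t) (fun i : Fin n => (i : ℕ))
            (fun i hi => by
              rw [Finset.mem_coe, Finset.mem_filter] at hi
              exact Finset.mem_coe.mpr (Finset.mem_range.mpr hi.2))
            (fun i _ j _ hij => Fin.ext hij)
          simpa using this
        calc ∑ i, leeWt (p ^ s) (x i)
            = ∑ i ∈ Finset.univ.filter (fun i : Fin n => i.val < t), leeWt (p ^ s) (x i) :=
              (Finset.sum_filter_of_ne hzero).symm
          _ ≤ ∑ _i ∈ Finset.univ.filter (fun i : Fin n => i.val < t), M :=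
              Finset.sum_le_sum fun i _ => hwt_le _
          _ = (Finset.univ.filter (fun i : Fin n => i.val < t)).card * M := by
              simp [mul_comm]
          _ ≤ t * M := Nat.mul_le_mul_right _ hcardle
      omega
    calc Nat.card C ≤ Nat.card (Fin (n - t) → ZMod (p ^ s)) :=
          Nat.card_le_card_of_injective _ hinj
      _ = (p ^ s) ^ (n - t) := by simp [Nat.card_fun, Nat.card_zmod]
  -- translate to the exponent inequality
  have hp1 : (1 : ℝ) < (p : ℝ) := by exact_mod_cast hp.one_lt
  have hle : (p : ℝ) ^ ((s : ℝ) * (k : ℝ)) ≤ (p : ℝ) ^ ((s : ℝ) * ((n : ℝ) - (t : ℝ))) := by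
    rw [← hcard]
    have h1 : (Nat.card C : ℝ) ≤ (((p ^ s) ^ (n - t) : ℕ) : ℝ) := by exact_mod_cast key
    have h2 : (((p ^ s) ^ (n - t) : ℕ) : ℝ) = (p : ℝ) ^ ((s : ℝ) * ((n : ℝ) - (t : ℝ))) := by
      have h3 : (((p ^ s) ^ (n - t) : ℕ) : ℝ) = (p : ℝ) ^ ((s * (n - t) : ℕ) : ℝ) := by
        rw [Real.rpow_natCast]
        push_cast [← pow_mul]
        ring
      rw [h3]
      congr 1
      push_cast [Nat.cast_sub htn.le]
      ring
    rw [← h2]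
    exact h1
  have hks : (s : ℝ) * (k : ℝ) ≤ (s : ℝ) * ((n : ℝ) - (t : ℝ)) :=
    (Real.rpow_le_rpow_left_iff hp1).mp hle
  have hkr : (k : ℝ) ≤ (n : ℝ) - (t : ℝ) :=
    le_of_mul_le_mul_left hks (by exact_mod_cast hs)
  have hkq : k ≤ (n : ℚ) - (t : ℚ) := by
    have : ((k : ℚ) : ℝ) ≤ (((n : ℚ) - (t : ℚ) : ℚ) : ℝ) := by push_cast; exact hkr
    exact_mod_cast this
  have hfloor : ⌊((d : ℚ) - 1) / ((M : ℕ) : ℚ)⌋ = (t : ℤ) := by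
    have h1 : ((d : ℚ) - 1) = ((d - 1 : ℕ) : ℚ) := by
      push_cast [Nat.cast_sub hd1]; ring
    rw [h1]
    have hq : (0 : ℚ) ≤ ((d - 1 : ℕ) : ℚ) / ((M : ℕ) : ℚ) := by positivity
    have h4 : ⌊((d - 1 : ℕ) : ℚ) / ((M : ℕ) : ℚ)⌋ =
        ((⌊((d - 1 : ℕ) : ℚ) / ((M : ℕ) : ℚ)⌋₊ : ℕ) : ℤ) := by
      rw [← Int.floor_toNat, Int.toNat_of_nonneg (Int.floor_nonneg.mpr hq)]
    rw [h4, Nat.floor_div_eq_div]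
  rw [hfloor]
  push_cast
  linarith
end

section
/- Let C ⊆ (ZMod (p^s))^n be a nonzero submodule of rank K (minimal number of generators). Then d_L(C) ≤ M·(n - K + 1), where M = ⌊p^s/2⌋. -/
/-- The rank of a code: the minimal cardinality of a generating set. -/
noncomputable def codeRank (p s n : ℕ) (C : Submodule (ZMod (p ^ s)) (Fin n → ZMod (p ^ s))) : ℕ :=
  sInf {m : ℕ | ∃ S : Finset (Fin n → ZMod (p ^ s)), S.card = m ∧
    Submodule.span (ZMod (p ^ s)) (S : Set (Fin n → ZMod (p ^ s))) = C}


lemma genLE (q m : ℕ) [NeZero q] (D : Submodule (ZMod q) (Fin m → ZMod q)) :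
    ∃ S : Finset (Fin m → ZMod q), S.card ≤ m ∧
      Submodule.span (ZMod q) (S : Set (Fin m → ZMod q)) = D := by
  classical
  let π : (Fin m → ℤ) →ₗ[ℤ] (Fin m → ZMod q) :=
    LinearMap.compLeft ((Int.castRingHom (ZMod q)).toIntLinearMap) (Fin m)
  have hπ : Function.Surjective π := by
    intro x
    refine ⟨fun i => (ZMod.intCast_surjective (x i)).choose, funext fun i => ?_⟩
    exact (ZMod.intCast_surjective (x i)).choose_spec
  set N : Submodule ℤ (Fin m → ℤ) := (D.restrictScalars ℤ).comap π with hN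
  obtain ⟨r, b⟩ := Submodule.basisOfPid (Pi.basisFun ℤ (Fin m)) N
  have hr : r ≤ m := by
    have h1 : Module.finrank ℤ N = r := by
      rw [Module.finrank_eq_card_basis b, Fintype.card_fin]
    have h2 := Submodule.finrank_le N
    rw [h1, Module.finrank_pi, Fintype.card_fin] at h2
    exact h2
  refine ⟨Finset.image (fun i => π (b i : Fin m → ℤ)) Finset.univ, ?_, ?_⟩
  · exact le_trans (Finset.card_image_le) (by simp [hr])
  · apply le_antisymm
    · rw [Submodule.span_le]
      intro x hx
      simp only [Finset.coe_image, Finset.coe_univ, Set.image_univ, Set.mem_range] at hx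
      obtain ⟨i, rfl⟩ := hx
      exact (b i).2
    · intro x hx
      obtain ⟨y, rfl⟩ := hπ x
      have hyN : y ∈ N := hx
      have hy' : (⟨y, hyN⟩ : N) ∈ Submodule.span ℤ (Set.range b) := by
        rw [b.span_eq]; trivial
      have hy2 : y ∈ Submodule.map N.subtype (Submodule.span ℤ (Set.range b)) :=
        ⟨⟨y, hyN⟩, hy', rfl⟩
      rw [Submodule.map_span] at hy2
      have hy3 : π y ∈ Submodule.map π (Submodule.span ℤ (N.subtype '' Set.range b)) :=
        ⟨y, hy2, rfl⟩
      rw [Submodule.map_span] at hy3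
      have hle := Submodule.span_le_restrictScalars ℤ (ZMod q)
        ((Finset.image (fun i => π (b i : Fin m → ℤ)) Finset.univ : Finset _) : Set (Fin m → ZMod q))
      have : π '' (N.subtype '' Set.range b) =
          ((Finset.image (fun i => π (b i : Fin m → ℤ)) Finset.univ : Finset _) : Set (Fin m → ZMod q)) := by
        rw [Set.image_image, ← Set.range_comp, Finset.coe_image, Finset.coe_univ, Set.image_univ]
        rfl
      rw [this] at hy3
      exact hle hy3

theorem lee_singleton_bound_rank (p s n : ℕ) (hp : p.Prime) (hs : 0 < s) (hn : 0 < n)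
    (C : Submodule (ZMod (p ^ s)) (Fin n → ZMod (p ^ s))) (hC : C ≠ ⊥) (K : ℕ)
    (hK : K = codeRank p s n C) :
    minLeeDist (p ^ s) n (C : Set (Fin n → ZMod (p ^ s))) ≤ (p ^ s / 2) * (n - K + 1) := by
  classical
  haveI : NeZero (p ^ s) := ⟨pow_ne_zero _ hp.pos.ne'⟩
  -- the defining set of codeRank
  set G : Set ℕ := {m : ℕ | ∃ S : Finset (Fin n → ZMod (p ^ s)), S.card = m ∧
    Submodule.span (ZMod (p ^ s)) (S : Set (Fin n → ZMod (p ^ s))) = C} with hG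
  obtain ⟨S₀, hS₀card, hS₀span⟩ := genLE (p ^ s) n C
  have hGne : G.Nonempty := ⟨S₀.card, S₀, rfl, hS₀span⟩
  have hKmem : K ∈ G := hK ▸ Nat.sInf_mem hGne
  have hKn : K ≤ n := hK ▸ le_trans (Nat.sInf_le ⟨S₀, rfl, hS₀span⟩) hS₀card
  have hK1 : 1 ≤ K := by
    by_contra h
    obtain ⟨S, hScard, hSspan⟩ := hKmem
    have : S = ∅ := Finset.card_eq_zero.mp (by omega)
    rw [this] at hSspan
    simp at hSspan
    exact hC hSspan.symm
  have h1 : K - 1 ≤ n := by omega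
  set f : (Fin n → ZMod (p ^ s)) →ₗ[ZMod (p ^ s)] (Fin (K - 1) → ZMod (p ^ s)) := LinearMap.funLeft (ZMod (p ^ s)) (ZMod (p ^ s)) (Fin.castLE h1) with hf
  -- find a nonzero codeword vanishing on the first K-1 coordinates
  have hexists : ∃ c, c ∈ C ∧ c ≠ 0 ∧ ∀ j : Fin (K - 1), c (Fin.castLE h1 j) = 0 := by
    by_contra hcon
    push_neg at hcon
    have hker : ∀ x ∈ C, f x = 0 → x = 0 := by
      intro x hx hfx
      by_contra hx0
      obtain ⟨j, hj⟩ := hcon x hx hx0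
      exact hj (congrFun hfx j)
    obtain ⟨T, hTcard, hTspan⟩ := genLE (p ^ s) (K - 1) (Submodule.map f C)
    set u : (Fin (K - 1) → ZMod (p ^ s)) → (Fin n → ZMod (p ^ s)) := fun t =>
      if h : ∃ y ∈ C, f y = t then h.choose else 0 with hu
    have hu1 : ∀ t ∈ T, u t ∈ C ∧ f (u t) = t := by
      intro t ht
      have : t ∈ Submodule.map f C := by rw [← hTspan]; exact Submodule.subset_span ht
      obtain ⟨y, hy, hyt⟩ := this
      have hex : ∃ y ∈ C, f y = t := ⟨y, hy, hyt⟩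
      simp only [hu, dif_pos hex]
      exact ⟨hex.choose_spec.1, hex.choose_spec.2⟩
    set A := Submodule.span (ZMod (p ^ s)) ((T.image u : Finset (Fin n → ZMod (p ^ s))) : Set (Fin n → ZMod (p ^ s))) with hA
    have hAC : A ≤ C := by
      rw [hA, Submodule.span_le]
      intro x hx
      simp only [Finset.coe_image, Set.mem_image, Finset.mem_coe] at hx
      obtain ⟨t, ht, rfl⟩ := hx
      exact (hu1 t ht).1
    have hmap : Submodule.map f A = Submodule.map f C := by
      rw [hA, Submodule.map_span]
      have : (⇑f '' ((T.image u : Finset (Fin n → ZMod (p ^ s))) : Set (Fin n → ZMod (p ^ s)))) = (T : Set _) := by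
        ext t
        simp only [Finset.coe_image, Set.mem_image, Finset.mem_coe]
        constructor
        · rintro ⟨x, ⟨t', ht', rfl⟩, rfl⟩
          rw [(hu1 t' ht').2]; exact ht'
        · intro ht
          exact ⟨u t, ⟨t, ht, rfl⟩, (hu1 t ht).2⟩
      rw [this, hTspan]
    have hAeq : A = C := by
      refine le_antisymm hAC fun x hx => ?_
      have : f x ∈ Submodule.map f A := by rw [hmap]; exact ⟨x, hx, rfl⟩
      obtain ⟨a, ha, hax⟩ := this
      have hxa : x - a = 0 := hker _ (Submodule.sub_mem C hx (hAC ha)) (by rw [map_sub, hax, sub_self])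
      have : x = a := by rwa [sub_eq_zero] at hxa
      rw [this]; exact ha
    have hmemG : (T.image u).card ∈ G := ⟨T.image u, rfl, hAeq⟩
    have : K ≤ (T.image u).card := by
      have h2 : codeRank p s n C ≤ (Finset.image u T).card := Nat.sInf_le hmemG
      omega
    have := Finset.card_image_le (s := T) (f := u)
    omega
  obtain ⟨c, hcC, hc0, hcz⟩ := hexists
  have hmain : minLeeDist (p ^ s) n (C : Set (Fin n → ZMod (p ^ s))) ≤ leeWtVec (p ^ s) n c :=
    Nat.sInf_le ⟨c, hcC, hc0, rfl⟩
  refine le_trans hmain ?_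
  have hbound : leeWtVec (p ^ s) n c ≤ (n - (K - 1)) * ((p ^ s) / 2) := by
    have hstep : ∀ i : Fin n, leeWt (p ^ s) (c i) ≤ if (i : ℕ) < K - 1 then 0 else (p ^ s) / 2 := by
      intro i
      by_cases hi : (i : ℕ) < K - 1
      · have : c i = 0 := by
          have := hcz ⟨(i : ℕ), hi⟩
          rwa [show Fin.castLE h1 ⟨(i : ℕ), hi⟩ = i from Fin.ext rfl] at this
        simp [hi, this, leeWt]
      · have hv : (c i).val < (p ^ s) := ZMod.val_lt (c i)
        have : leeWt (p ^ s) (c i) ≤ (p ^ s) / 2 := by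
          unfold leeWt
          rcases le_total ((c i).val) ((p ^ s) - (c i).val) with h | h
          · rw [min_eq_left h]; omega
          · rw [min_eq_right h]; omega
        simpa [hi] using this
    calc leeWtVec (p ^ s) n c ≤ ∑ i : Fin n, if (i : ℕ) < K - 1 then 0 else (p ^ s) / 2 :=
          Finset.sum_le_sum fun i _ => hstep i
      _ = (n - (K - 1)) * ((p ^ s) / 2) := by
          rw [Finset.sum_ite, Finset.sum_const_zero, Finset.sum_const, zero_add, smul_eq_mul]
          congr 1
          have hcardlt : (Finset.univ.filter (fun i : Fin n => (i : ℕ) < K - 1)).card = K - 1 := by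
            have himg : (Finset.univ.image (Fin.castLE h1)) =
                Finset.univ.filter (fun i : Fin n => (i : ℕ) < K - 1) := by
              ext i
              simp only [Finset.mem_image, Finset.mem_univ, true_and, Finset.mem_filter]
              constructor
              · rintro ⟨j, rfl⟩; exact j.2
              · intro hi; exact ⟨⟨(i : ℕ), hi⟩, Fin.ext rfl⟩
            rw [← himg, Finset.card_image_of_injective _ (Fin.castLE_injective h1)]
            simp
          have := Finset.card_filter_add_card_filter_not
            (s := (Finset.univ : Finset (Fin n))) (fun i : Fin n => (i : ℕ) < K - 1)
          rw [hcardlt] at this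
          simp only [Finset.card_univ, Fintype.card_fin] at this
          omega
  refine le_trans hbound ?_
  have : n - (K - 1) = n - K + 1 := by omega
  rw [this, Nat.mul_comm]
end

section
/- Let C ⊆ (ZMod (p^s))^n be a nonzero non-degenerate submodule of rank K. Then d_L(C) ≤ ⌊p/2⌋ · p^{s-1} · (n - K + 1). (Join-support Lee-metric Singleton bound.) -/
lemma leeWt_le_of_ptorsion (p s : ℕ) (hp : p.Prime) (hs : 0 < s) (x : ZMod (p ^ s))
    (hx : p • x = 0) : leeWt (p ^ s) x ≤ (p / 2) * p ^ (s - 1) := by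
  have hps : 0 < p ^ s := pow_pos hp.pos s
  haveI : NeZero (p ^ s) := ⟨hps.ne'⟩
  have h1 : ((p * x.val : ℕ) : ZMod (p ^ s)) = 0 := by
    push_cast
    rw [ZMod.natCast_rightInverse x, ← nsmul_eq_mul, hx]
  have h2 : p ^ s ∣ p * x.val := (ZMod.natCast_eq_zero_iff _ _).mp h1
  have hss : p ^ s = p * p ^ (s - 1) := by
    conv_lhs => rw [show s = (s-1) + 1 by omega, pow_succ, mul_comm]
  have h3 : p ^ (s - 1) ∣ x.val := by
    refine (Nat.mul_dvd_mul_iff_left hp.pos).mp ?_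
    rw [← hss]; exact h2
  obtain ⟨k, hk⟩ := h3
  have hvlt : x.val < p ^ s := ZMod.val_lt x
  have hkp : k < p := by
    rw [hk, hss, mul_comm p] at hvlt
    exact lt_of_mul_lt_mul_left hvlt (Nat.zero_le _)
  unfold leeWt
  rcases le_or_gt k (p / 2) with h | h
  · calc min x.val (p ^ s - x.val) ≤ x.val := min_le_left _ _
      _ = p ^ (s-1) * k := hk
      _ ≤ p ^ (s-1) * (p / 2) := Nat.mul_le_mul_left _ h
      _ = (p / 2) * p ^ (s-1) := mul_comm _ _
  · have hpk : p - k ≤ p / 2 := by omega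
    calc min x.val (p ^ s - x.val) ≤ p ^ s - x.val := min_le_right _ _
      _ = p ^ (s-1) * (p - k) := by rw [hk, hss, mul_comm p, Nat.mul_sub]
      _ ≤ p ^ (s-1) * (p / 2) := Nat.mul_le_mul_left _ hpk
      _ = (p / 2) * p ^ (s-1) := mul_comm _ _

theorem submodule_pi_span_card_le (R : Type) [CommRing R] [IsPrincipalIdealRing R] :
    ∀ t : ℕ, ∀ N : Submodule R (Fin t → R),
    ∃ S : Finset (Fin t → R), S.card ≤ t ∧ Submodule.span R (S : Set (Fin t → R)) = N := by
  intro t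
  induction t with
  | zero =>
    intro N
    exact ⟨∅, le_rfl, by rw [Finset.coe_empty, Submodule.span_empty]; exact Subsingleton.elim _ _⟩
  | succ t IH =>
    intro N
    classical
    set π : (Fin (t+1) → R) →ₗ[R] R := LinearMap.proj (Fin.last t) with hπ
    set ρ : (Fin (t+1) → R) →ₗ[R] (Fin t → R) := LinearMap.funLeft R R Fin.castSucc with hρ
    let σ : (Fin t → R) →ₗ[R] (Fin (t+1) → R) :=
      { toFun := fun y => Fin.snoc y 0
        map_add' := by
          intro a b; ext i
          refine Fin.lastCases ?_ (fun j => ?_) i <;> simp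
        map_smul' := by
          intro r a; ext i
          refine Fin.lastCases ?_ (fun j => ?_) i <;> simp }
    have hσρ : ∀ x : Fin (t+1) → R, x (Fin.last t) = 0 → σ (ρ x) = x := by
      intro x hx
      ext i
      refine Fin.lastCases ?_ (fun j => ?_) i
      · simpa [σ] using hx.symm
      · simp [σ, ρ, LinearMap.funLeft]
    set I : Ideal R := N.map π with hI
    haveI : I.IsPrincipal := IsPrincipalIdealRing.principal I
    set a : R := Submodule.IsPrincipal.generator I with ha
    have haI : a ∈ I := Submodule.IsPrincipal.generator_mem I
    obtain ⟨v, hvN, hva⟩ := haI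
    obtain ⟨S', hS'card, hS'span⟩ := IH ((N ⊓ LinearMap.ker π).map ρ)
    refine ⟨insert v (S'.image σ), ?_, ?_⟩
    · calc (insert v (S'.image σ)).card ≤ (S'.image σ).card + 1 := Finset.card_insert_le _ _
        _ ≤ S'.card + 1 := by gcongr; exact Finset.card_image_le
        _ ≤ t + 1 := by omega
    · apply le_antisymm
      · rw [Submodule.span_le]
        intro x hx
        simp only [Finset.coe_insert, Set.mem_insert_iff, Finset.coe_image, Set.mem_image] at hx
        rcases hx with rfl | ⟨s', hs', rfl⟩
        · exact hvN
        · have : s' ∈ (N ⊓ LinearMap.ker π).map ρ := by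
            rw [← hS'span]; exact Submodule.subset_span hs'
          obtain ⟨y, hy, rfl⟩ := this
          have hy0 : y (Fin.last t) = 0 := hy.2
          rw [hσρ y hy0]
          exact hy.1
      · intro x hx
        have hπx : π x ∈ I := ⟨x, hx, rfl⟩
        rw [← Submodule.IsPrincipal.span_singleton_generator I, ← ha,
          Ideal.submodule_span_eq, Ideal.mem_span_singleton'] at hπx
        obtain ⟨r, hr⟩ := hπx
        have hyN : x - r • v ∈ N ⊓ LinearMap.ker π := by
          constructor
          · exact N.sub_mem hx (N.smul_mem r hvN)
          · show x - r • v ∈ LinearMap.ker π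
            rw [LinearMap.mem_ker, map_sub, map_smul, hva, smul_eq_mul, hr, sub_self]
        have hρy : ρ (x - r • v) ∈ (N ⊓ LinearMap.ker π).map ρ := ⟨_, hyN, rfl⟩
        rw [← hS'span] at hρy
        have h1 : σ (ρ (x - r • v)) ∈ Submodule.map σ (Submodule.span R (S' : Set _)) :=
          ⟨_, hρy, rfl⟩
        rw [Submodule.map_span] at h1
        have h2 : x - r • v ∈ Submodule.span R ((σ '' S') : Set (Fin (t+1) → R)) := by
          rwa [hσρ (x - r • v) hyN.2] at h1
        have h3 : Submodule.span R ((σ '' S') : Set (Fin (t+1) → R)) ≤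
            Submodule.span R ((insert v (S'.image σ) : Finset _) : Set (Fin (t+1) → R)) := by
          apply Submodule.span_mono
          intro z hz
          simp only [Finset.coe_insert, Set.mem_insert_iff, Finset.coe_image]
          exact Or.inr hz
        have h4 : v ∈ Submodule.span R ((insert v (S'.image σ) : Finset _) : Set (Fin (t+1) → R)) :=
          Submodule.subset_span (by simp)
        have := Submodule.add_mem _ (h3 h2) (Submodule.smul_mem _ r h4)
        simpa using this

/-- Hamming weight of a vector. -/
def hwt {m n : ℕ} (c : Fin n → ZMod m) : ℕ := (Finset.univ.filter fun i => c i ≠ 0).card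

theorem join_support_lee_singleton_bound (p s n : ℕ) (hp : p.Prime) (hs : 0 < s) (hn : 0 < n)
    (C : Submodule (ZMod (p ^ s)) (Fin n → ZMod (p ^ s))) (hC : C ≠ ⊥)
    (hnd : ∀ j : Fin n, ∃ c ∈ C, c j ≠ 0) (K : ℕ) (hK : K = codeRank p s n C) :
    minLeeDist (p ^ s) n (C : Set (Fin n → ZMod (p ^ s))) ≤
      (p / 2) * p ^ (s - 1) * (n - K + 1) := by
  classical
  set R := ZMod (p ^ s) with hR
  have hps : 0 < p ^ s := pow_pos hp.pos s
  haveI : NeZero (p ^ s) := ⟨hps.ne'⟩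
  haveI : IsPrincipalIdealRing R :=
    IsPrincipalIdealRing.of_surjective (Int.castRingHom R) ZMod.intCast_surjective
  -- a nonzero codeword of minimal Hamming weight
  obtain ⟨c1, hc1C, hc1ne⟩ := (Submodule.ne_bot_iff C).mp hC
  have hne : {w : ℕ | ∃ c ∈ C, c ≠ 0 ∧ w = hwt c}.Nonempty := ⟨hwt c1, c1, hc1C, hc1ne, rfl⟩
  set d : ℕ := sInf {w : ℕ | ∃ c ∈ C, c ≠ 0 ∧ w = hwt c} with hd
  obtain ⟨c₀, hc₀C, hc₀ne, hc₀wt⟩ := Nat.sInf_mem hne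
  rw [← hd] at hc₀wt
  have hmin : ∀ c ∈ C, c ≠ 0 → d ≤ hwt c := fun c hc hcne => Nat.sInf_le ⟨c, hc, hcne, rfl⟩
  have hd1 : 1 ≤ d := by
    rw [hc₀wt]
    unfold hwt
    obtain ⟨i, hi⟩ := Function.ne_iff.mp hc₀ne
    have : i ∈ Finset.univ.filter fun j => c₀ j ≠ 0 := by
      simp only [Finset.mem_filter, Finset.mem_univ, true_and]
      simpa using hi
    have := Finset.card_pos.mpr ⟨i, this⟩
    omega
  have hdn : d ≤ n := by
    rw [hc₀wt]
    unfold hwt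
    simpa using Finset.card_filter_le Finset.univ (fun j => c₀ j ≠ 0)
  -- Hamming Singleton bound: d ≤ n - K + 1
  have hsingleton : d ≤ n - K + 1 := by
    obtain ⟨T, _, hTcard⟩ := Finset.exists_subset_card_eq (s := (Finset.univ : Finset (Fin n))) (n := d - 1)
      (by simpa using by omega)
    set t : ℕ := Tᶜ.card with ht
    have htval : t = n - (d - 1) := by
      rw [ht, Finset.card_compl, hTcard]; simp
    set g : Fin t → Fin n := fun i => ((Tᶜ.equivFin.symm i : {x // x ∈ Tᶜ}) : Fin n) with hg
    set φ : (Fin n → R) →ₗ[R] (Fin t → R) := LinearMap.funLeft R R g with hφ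
    have hφinj : ∀ x ∈ C, φ x = 0 → x = 0 := by
      intro x hx hφx
      by_contra hxne
      have h5 : hwt x ≤ d - 1 := by
        rw [← hTcard]
        unfold hwt
        apply Finset.card_le_card
        intro j hj
        simp only [Finset.mem_filter, Finset.mem_univ, true_and] at hj
        by_contra hjT
        have hjc : j ∈ Tᶜ := Finset.mem_compl.mpr hjT
        have hcong := congrFun hφx (Tᶜ.equivFin ⟨j, hjc⟩)
        rw [hφ] at hcong
        simp only [LinearMap.funLeft_apply, Pi.zero_apply, hg, Equiv.symm_apply_apply] at hcong
        exact hj hcong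
      have h6 := hmin x hx hxne
      omega
    obtain ⟨S, hScard, hSspan⟩ := submodule_pi_span_card_le R t (C.map φ)
    have hpull : ∀ w : Fin t → R, ∃ x : Fin n → R, w ∈ S → x ∈ C ∧ φ x = w := by
      intro w
      by_cases hw : w ∈ S
      · have : w ∈ C.map φ := by rw [← hSspan]; exact Submodule.subset_span hw
        obtain ⟨x, hx, hxw⟩ := this
        exact ⟨x, fun _ => ⟨hx, hxw⟩⟩
      · exact ⟨0, fun h => absurd h hw⟩
    choose f hf using hpull
    set T' : Finset (Fin n → R) := S.image f with hT'
    have hT'sub : (T' : Set (Fin n → R)) ⊆ C := by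
      intro x hx
      simp only [hT', Finset.coe_image, Set.mem_image, Finset.mem_coe] at hx
      obtain ⟨w, hw, rfl⟩ := hx
      exact (hf w hw).1
    have hspan : Submodule.span R (T' : Set (Fin n → R)) = C := by
      apply le_antisymm
      · rw [Submodule.span_le]; exact hT'sub
      · intro x hx
        have h1 : φ x ∈ Submodule.span R (S : Set (Fin t → R)) := by
          rw [hSspan]; exact ⟨x, hx, rfl⟩
        have h2 : Submodule.span R (S : Set (Fin t → R)) ≤
            Submodule.map φ (Submodule.span R (T' : Set (Fin n → R))) := by
          rw [Submodule.map_span]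
          apply Submodule.span_mono
          intro w hw
          rw [Finset.mem_coe] at hw
          exact ⟨f w, Finset.mem_coe.mpr (Finset.mem_image_of_mem f hw), (hf w hw).2⟩
        obtain ⟨y, hy, hyx⟩ := h2 h1
        have hyC : y ∈ C := Submodule.span_le.mpr hT'sub hy
        have hsub : x - y ∈ C := C.sub_mem hx hyC
        have hφ0 : φ (x - y) = 0 := by rw [map_sub, hyx, sub_self]
        have hxy : x = y := sub_eq_zero.mp (hφinj _ hsub hφ0)
        rw [hxy]; exact hy
    have hKle : K ≤ t := by
      rw [hK]
      exact le_trans (Nat.sInf_le ⟨T', rfl, hspan⟩) (le_trans Finset.card_image_le hScard)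
    omega
  -- socle scaling: pass to a p-torsion codeword
  have hps_smul : (p ^ s) • c₀ = 0 := by
    have h0 : ((p ^ s : ℕ) : R) = 0 := ZMod.natCast_self _
    ext i
    rw [Pi.smul_apply, nsmul_eq_mul, h0, zero_mul, Pi.zero_apply]
  have hex : ∃ e, p ^ e • c₀ = 0 := ⟨s, hps_smul⟩
  set e := Nat.find hex with he
  have hespec : p ^ e • c₀ = 0 := Nat.find_spec hex
  have he1 : 1 ≤ e := by
    rcases Nat.eq_zero_or_pos e with h | h
    · exfalso
      apply hc₀ne
      have h7 := hespec
      rw [h, pow_zero, one_smul] at h7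
      exact h7
    · exact h
  set c' : Fin n → R := p ^ (e - 1) • c₀ with hc'
  have hc'ne : c' ≠ 0 := Nat.find_min hex (by omega)
  have hc'C : c' ∈ C := by
    rw [hc', ← Nat.cast_smul_eq_nsmul R]
    exact C.smul_mem _ hc₀C
  have hpc' : p • c' = 0 := by
    rw [hc', ← mul_smul, show p * p ^ (e - 1) = p ^ e by
      rw [← pow_succ']; congr 1; omega]
    exact hespec
  have hsupp' : (Finset.univ.filter fun i => c' i ≠ 0) ⊆
      (Finset.univ.filter fun i => c₀ i ≠ 0) := by
    intro i hi
    simp only [Finset.mem_filter, Finset.mem_univ, true_and] at hi ⊢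
    intro h0
    apply hi
    rw [hc', Pi.smul_apply, h0, smul_zero]
  have hwtle : hwt c' ≤ d := by
    rw [hc₀wt]
    exact Finset.card_le_card hsupp'
  set B : ℕ := (p / 2) * p ^ (s - 1) with hB
  have hsum : leeWtVec (p ^ s) n c' ≤ hwt c' * B := by
    rw [leeWtVec]
    have hz : ∀ i ∈ Finset.univ, i ∉ (Finset.univ.filter fun i => c' i ≠ 0) →
        leeWt (p ^ s) (c' i) = 0 := by
      intro i _ hi
      simp only [Finset.mem_filter, Finset.mem_univ, true_and, not_not] at hi
      rw [hi]
      simp [leeWt]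
    rw [← Finset.sum_subset (Finset.filter_subset _ _) hz]
    have hbd : ∀ i ∈ Finset.univ.filter fun i => c' i ≠ 0, leeWt (p ^ s) (c' i) ≤ B := by
      intro i _
      apply leeWt_le_of_ptorsion p s hp hs
      have := congrFun hpc' i
      rw [Pi.smul_apply] at this
      exact this
    calc ∑ i ∈ Finset.univ.filter fun i => c' i ≠ 0, leeWt (p ^ s) (c' i)
        ≤ (Finset.univ.filter fun i => c' i ≠ 0).card • B := Finset.sum_le_card_nsmul _ _ _ hbd
      _ = hwt c' * B := by rw [smul_eq_mul]; rfl
  refine le_trans (Nat.sInf_le ⟨c', hc'C, hc'ne, rfl⟩) ?_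
  calc leeWtVec (p ^ s) n c' ≤ hwt c' * B := hsum
    _ ≤ (n - K + 1) * B := Nat.mul_le_mul_right _ (le_trans hwtle hsingleton)
    _ = B * (n - K + 1) := mul_comm _ _
end

section
/- Let C ⊆ (ZMod (p^s))^n be a free submodule of rank K with generator matrix (I_K | A) where A ∈ (ZMod (p^s))^{K × (n-K)}. If for some 1 ≤ ℓ < s every entry of one row of A is divisible by p^ℓ, then d_L(C) ≤ p^{s-ℓ}. -/
/-- Lee weight of a vector over `ZMod m` indexed by a finite type. -/
def leeWtF (m : ℕ) {ι : Type} [Fintype ι] (x : ι → ZMod m) : ℕ := ∑ i, leeWt m (x i)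

/-- The free code with generator matrix `(I_K | A)`: the set of words
`(u | u·A)` for messages `u`. -/
def freeCode (p s K t : ℕ) (A : Matrix (Fin K) (Fin t) (ZMod (p ^ s))) :
    Set ((Fin K ⊕ Fin t) → ZMod (p ^ s)) :=
  {c | ∃ u : Fin K → ZMod (p ^ s), c = Sum.elim u (fun j => ∑ i, u i * A i j)}

theorem filtration_bound_row_divisible (p s n K ℓ : ℕ) (hp : p.Prime) (hs : 0 < s)
    (hK : 0 < K) (hKn : K ≤ n) (A : Matrix (Fin K) (Fin (n - K)) (ZMod (p ^ s)))
    (hℓ : 1 ≤ ℓ) (hℓs : ℓ < s)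
    (hrow : ∃ i : Fin K, ∀ j : Fin (n - K),
      ∃ y : ZMod (p ^ s), A i j = (p : ZMod (p ^ s)) ^ ℓ * y) :
    sInf {w : ℕ | ∃ c ∈ freeCode p s K (n - K) A, c ≠ 0 ∧ w = leeWtF (p ^ s) c} ≤
      p ^ (s - ℓ) := by
  obtain ⟨i, hi⟩ := hrow
  haveI : NeZero (p ^ s) := ⟨pow_ne_zero s hp.pos.ne'⟩
  set q : ZMod (p ^ s) := (p : ZMod (p ^ s)) ^ (s - ℓ) with hq
  set u : Fin K → ZMod (p ^ s) := fun k => if k = i then q else 0 with hu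
  set c : (Fin K ⊕ Fin (n - K)) → ZMod (p ^ s) :=
    Sum.elim u (fun j => ∑ k, u k * A k j) with hc
  have hlt : p ^ (s - ℓ) < p ^ s := Nat.pow_lt_pow_right hp.one_lt (by omega)
  have hqval : q.val = p ^ (s - ℓ) := by
    have : q = ((p ^ (s - ℓ) : ℕ) : ZMod (p ^ s)) := by push_cast [hq]; ring
    rw [this, ZMod.val_natCast_of_lt hlt]
  have hqne : q ≠ 0 := by
    intro h
    have := hqval
    rw [h, ZMod.val_zero] at this
    exact (pow_ne_zero _ hp.pos.ne') this.symm
  have hzero : ∀ j, (∑ k, u k * A k j) = 0 := by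
    intro j
    rw [Finset.sum_eq_single i]
    · obtain ⟨y, hy⟩ := hi j
      rw [hu]
      simp only [if_pos rfl, hy, hq, if_true]
      rw [← mul_assoc, ← pow_add]
      have hsl : s - ℓ + ℓ = s := by omega
      rw [hsl]
      have : ((p : ZMod (p ^ s)) ^ s) = ((p ^ s : ℕ) : ZMod (p ^ s)) := by push_cast; ring
      rw [this, ZMod.natCast_self, zero_mul]
    · intro b _ hb; simp [hu, hb]
    · intro h; exact absurd (Finset.mem_univ i) h
  have hcmem : c ∈ freeCode p s K (n - K) A := ⟨u, rfl⟩
  have hcne : c ≠ 0 := by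
    intro h
    have : c (Sum.inl i) = 0 := by rw [h]; rfl
    simp only [hc, Sum.elim_inl, hu, if_pos rfl] at this
    exact hqne this
  have hwt : leeWtF (p ^ s) c ≤ p ^ (s - ℓ) := by
    rw [leeWtF, Fintype.sum_sum_type]
    have h1 : ∑ k : Fin K, leeWt (p ^ s) (c (Sum.inl k)) = leeWt (p ^ s) q := by
      rw [Finset.sum_eq_single i]
      · simp [hc, hu]
      · intro b _ hb; simp [hc, hu, hb, leeWt]
      · intro h; exact absurd (Finset.mem_univ i) h
    have h2 : ∑ j : Fin (n - K), leeWt (p ^ s) (c (Sum.inr j)) = 0 := by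
      apply Finset.sum_eq_zero
      intro j _
      simp [hc, hzero j, leeWt]
    rw [h1, h2, add_zero, leeWt, hqval]
    exact le_trans (min_le_left _ _) le_rfl
  calc sInf {w : ℕ | ∃ c ∈ freeCode p s K (n - K) A, c ≠ 0 ∧ w = leeWtF (p ^ s) c}
      ≤ leeWtF (p ^ s) c := Nat.sInf_le ⟨c, hcmem, hcne, rfl⟩
    _ ≤ p ^ (s - ℓ) := hwt
end

section
/- Let C ⊆ (ZMod (p^s))^n be a free submodule of rank K generated by (I_K | A), and suppose some row i of A has exactly m entries divisible by p. Then the socle C ∩ p^{s-1}(ZMod (p^s))^n contains a nonzero codeword of Lee weight at most p^{s-1} + (n - K - m)·⌊p/2⌋·p^{s-1}, hence d_L(C) ≤ p^{s-1} + (n - K - m)·⌊p/2⌋·p^{s-1}. -/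
open scoped Classical

lemma my_pow_val (p s : ℕ) (hp : 1 < p) (hs : 0 < s) :
    ((p : ZMod (p^s)) ^ (s-1)).val = p ^ (s-1) := by
  haveI : NeZero (p^s) := ⟨(pow_pos (by omega) s).ne'⟩
  have h1 : ((p : ZMod (p^s)) ^ (s-1)) = ((p ^ (s-1) : ℕ) : ZMod (p^s)) := by push_cast; ring
  rw [h1, ZMod.val_natCast, Nat.mod_eq_of_lt]
  exact Nat.pow_lt_pow_right hp (by omega)

lemma my_val_mul (p s : ℕ) (hp : 1 < p) (hs : 0 < s) (y : ZMod (p^s)) :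
    ((p : ZMod (p^s)) ^ (s-1) * y).val = p ^ (s-1) * (y.val % p) := by
  haveI : NeZero (p^s) := ⟨(pow_pos (by omega) s).ne'⟩
  rw [ZMod.val_mul, my_pow_val p s hp hs]
  have h : p ^ s = p ^ (s-1) * p := by
    rw [← pow_succ]; congr 1; omega
  have h2 : p ^ (s-1) * y.val % (p ^ (s-1) * p) = p ^ (s-1) * (y.val % p) :=
    Nat.mul_mod_mul_left _ _ _
  rwa [← h] at h2

lemma my_leeWt_le (p s : ℕ) (hp : 1 < p) (hs : 0 < s) (y : ZMod (p^s)) :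
    leeWt (p^s) ((p : ZMod (p^s)) ^ (s-1) * y) ≤ p / 2 * p ^ (s-1) := by
  rw [leeWt, my_val_mul p s hp hs]
  set k := y.val % p with hk
  have hkp : k < p := Nat.mod_lt _ (by omega)
  have hps : p ^ s = p ^ (s-1) * p := by rw [← pow_succ]; congr 1; omega
  rcases le_or_gt k (p / 2) with h | h
  · exact le_trans (min_le_left _ _)
      (by rw [mul_comm]; exact Nat.mul_le_mul_right _ h)
  · refine le_trans (min_le_right _ _) ?_
    have h3 : p ^ s - p ^ (s-1) * k = p ^ (s-1) * (p - k) := by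
      rw [hps, Nat.mul_sub]
    rw [h3, mul_comm]
    exact Nat.mul_le_mul_right _ (by omega)

lemma my_leeWt_zero (N : ℕ) : leeWt N (0 : ZMod N) = 0 := by
  simp [leeWt]

theorem socle_codeword_bound (p s n K m : ℕ) (hp : p.Prime) (hs : 0 < s)
    (hK : 0 < K) (hKn : K ≤ n) (A : Matrix (Fin K) (Fin (n - K)) (ZMod (p ^ s)))
    (hrow : ∃ i : Fin K,
      (Finset.univ.filter
        (fun j : Fin (n - K) => ∃ y : ZMod (p ^ s), A i j = (p : ZMod (p ^ s)) * y)).card = m) :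
    (∃ c ∈ freeCode p s K (n - K) A, c ≠ 0 ∧
      (∀ j, ∃ y : ZMod (p ^ s), c j = (p : ZMod (p ^ s)) ^ (s - 1) * y) ∧
      leeWtF (p ^ s) c ≤ p ^ (s - 1) + (n - K - m) * (p / 2) * p ^ (s - 1)) ∧
    sInf {w : ℕ | ∃ c ∈ freeCode p s K (n - K) A, c ≠ 0 ∧ w = leeWtF (p ^ s) c} ≤
      p ^ (s - 1) + (n - K - m) * (p / 2) * p ^ (s - 1) := by
  have hp1 : 1 < p := hp.one_lt
  haveI : NeZero (p^s) := ⟨(pow_pos (by omega) s).ne'⟩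
  obtain ⟨i, hi⟩ := hrow
  set P : ZMod (p^s) := (p : ZMod (p^s)) ^ (s-1) with hP
  set u : Fin K → ZMod (p^s) := fun i' => if i' = i then P else 0 with hu
  set c : (Fin K ⊕ Fin (n-K)) → ZMod (p^s) :=
    Sum.elim u (fun j => ∑ i', u i' * A i' j) with hcdef
  have hsum : ∀ j, (∑ i', u i' * A i' j) = P * A i j := by
    intro j
    rw [hu]
    simp [ite_mul]
  have hPval : P.val = p ^ (s-1) := my_pow_val p s hp1 hs
  have hPne : P ≠ 0 := by
    intro h
    have : P.val = 0 := by rw [h, ZMod.val_zero]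
    rw [hPval] at this
    exact (pow_pos (by omega) (s-1)).ne' this
  have hcne : c ≠ 0 := by
    intro h
    apply hPne
    have := congrFun h (Sum.inl i)
    simpa [hcdef, hu] using this
  -- Pp : P * p = 0
  have hPp : P * (p : ZMod (p^s)) = 0 := by
    rw [hP, ← pow_succ]
    have : s - 1 + 1 = s := by omega
    rw [this]
    have : ((p : ZMod (p^s)))^s = ((p^s : ℕ) : ZMod (p^s)) := by push_cast; ring
    rw [this, ZMod.natCast_self]
  -- weight bound
  set S := Finset.univ.filter
      (fun j : Fin (n - K) => ∃ y : ZMod (p ^ s), A i j = (p : ZMod (p ^ s)) * y) with hS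
  have hi' : S.card = m := by
    rw [hS]
    convert hi using 2
    ext j
    simp
  have hmle : m ≤ n - K := by
    rw [← hi']
    exact le_trans (Finset.card_le_univ _) (by simp)
  have hwt : leeWtF (p ^ s) c ≤ p ^ (s - 1) + (n - K - m) * (p / 2) * p ^ (s - 1) := by
    rw [leeWtF, Fintype.sum_sum_type]
    have hleft : (∑ i' : Fin K, leeWt (p^s) (c (Sum.inl i'))) = p ^ (s-1) := by
      have : ∀ i' : Fin K, leeWt (p^s) (c (Sum.inl i')) =
          if i' = i then leeWt (p^s) P else 0 := by
        intro i'
        by_cases h : i' = i <;> simp [hcdef, hu, h, my_leeWt_zero]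
      rw [Finset.sum_congr rfl (fun i' _ => this i'), Finset.sum_ite_eq' Finset.univ i]
      simp only [Finset.mem_univ, if_true]
      rw [leeWt, hPval]
      apply min_eq_left
      have h2 : 2 * p ^ (s-1) ≤ p * p ^ (s-1) := Nat.mul_le_mul_right _ (by omega)
      have h3 : p * p ^ (s-1) = p ^ s := by rw [← pow_succ']; congr 1; omega
      omega
    have hright : (∑ j, leeWt (p^s) (c (Sum.inr j))) ≤
        (n - K - m) * (p / 2) * p ^ (s-1) := by
      have hc' : ∀ j, c (Sum.inr j) = P * A i j := fun j => hsum j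
      calc (∑ j, leeWt (p^s) (c (Sum.inr j)))
          = ∑ j ∈ S, leeWt (p^s) (P * A i j) +
            ∑ j ∈ Finset.univ.filter (fun j => ¬ (∃ y : ZMod (p^s),
              A i j = (p : ZMod (p^s)) * y)), leeWt (p^s) (P * A i j) := by
            simp only [hc']
            rw [← Finset.sum_filter_add_sum_filter_not Finset.univ
              (fun j => ∃ y : ZMod (p^s), A i j = (p : ZMod (p^s)) * y)]
        _ ≤ 0 + (n - K - m) * (p / 2 * p ^ (s-1)) := by
            apply Nat.add_le_add
            · apply le_of_eq
              apply Finset.sum_eq_zero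
              intro j hj
              rw [hS, Finset.mem_filter] at hj
              obtain ⟨y, hy⟩ := hj.2
              rw [hy, ← mul_assoc, hPp, zero_mul, my_leeWt_zero]
            · refine le_trans (Finset.sum_le_card_nsmul _ _ (p / 2 * p ^ (s-1))
                (fun j _ => my_leeWt_le p s hp1 hs (A i j))) ?_
              rw [smul_eq_mul]
              apply Nat.mul_le_mul_right
              have hcard : (Finset.univ.filter (fun j => ¬ (∃ y : ZMod (p^s),
                  A i j = (p : ZMod (p^s)) * y))).card =
                  (Finset.univ : Finset (Fin (n-K))).card - S.card := by
                rw [hS, Finset.filter_not, Finset.card_sdiff_of_subset (Finset.filter_subset _ _)]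
              rw [hcard, hi', Finset.card_univ]
              simp
        _ = (n - K - m) * (p / 2) * p ^ (s-1) := by ring
    omega
  have hmem : c ∈ freeCode p s K (n - K) A := ⟨u, rfl⟩
  have hall : ∀ j, ∃ y : ZMod (p ^ s), c j = (p : ZMod (p ^ s)) ^ (s - 1) * y := by
    rintro (i' | j)
    · by_cases h : i' = i
      · exact ⟨1, by simp [hcdef, hu, h, hP]⟩
      · exact ⟨0, by simp [hcdef, hu, h]⟩
    · exact ⟨A i j, by simpa [hcdef, hP] using hsum j⟩
  refine ⟨⟨c, hmem, hcne, hall, hwt⟩, ?_⟩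
  exact le_trans (Nat.sInf_le ⟨c, hmem, hcne, rfl⟩) hwt
end
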